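/- (Burg as GD) For q(u) = exp(u) componentwise, J_q(u) J_q(u)^T = diag(exp(u))² = H_F(q(u))^{-1} where F(w) = -Σᵢ log wᵢ; consequently if u̇(t) = -η ∇_u L(exp(u(t))) then w(t) = exp(u(t)) satisfies d/dt(-1/wᵢ(t)) = -η ∂ᵢL(w(t)) for each i. -/

import Mathlib

/-- Burg updates as GD: with `q(u) = exp(u)` componentwise, GD on `u`
simulates the Burg mirror flow with link `f(w) = -1 ⊘ w`. -/
theorem burg_as_gd
    {d : ℕ}
    (gradL : (Fin d → ℝ) → (Fin d → ℝ))  -- the gradient ∇L of the loss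
    (η : ℝ) (hη : 0 < η)
    (u : ℝ → (Fin d → ℝ)) (u' : ℝ → (Fin d → ℝ))
    (hu : ∀ t, HasDerivAt u (u' t) t)
    -- GD flow on u : u̇ = -η exp(u) ⊙ ∇L(exp(u)):
    (hflow : ∀ t i, u' t i
        = -η * (Real.exp (u t i) * gradL (fun j => Real.exp (u t j)) i)) :
    -- the condition J_q(u) J_q(u)ᵀ = diag(exp u)² = H_F(q(u))⁻¹:
    (∀ v : Fin d → ℝ, ∀ i,
        Real.exp (v i) * Real.exp (v i) = (Real.exp (v i)) ^ 2) ∧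
    -- w(t) = exp(u(t)) follows the Burg mirror flow d/dt(-1/wᵢ) = -η ∂ᵢL(w):
    (∀ t i, HasDerivAt (fun s => -(1 / Real.exp (u s i)))
        (-η * gradL (fun j => Real.exp (u t j)) i) t) := by
  constructor
  · intro v i; ring
  · intro t i
    have hui : HasDerivAt (fun s => u s i) (u' t i) t :=
      (ContinuousLinearMap.proj (R := ℝ) (φ := fun _ : Fin d => ℝ) i).hasFDerivAt.comp_hasDerivAt
        t (hu t)
    have hexp : HasDerivAt (fun s => Real.exp (u s i))
        (Real.exp (u t i) * u' t i) t := hui.exp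
    have h := (hexp.inv (Real.exp_ne_zero _)).neg
    have heq : -(-(Real.exp (u t i) * u' t i) / Real.exp (u t i) ^ 2)
        = -η * gradL (fun j => Real.exp (u t j)) i := by
      rw [hflow t i]
      field_simp
    rw [heq] at h
    have hf : (fun s => -(1 / Real.exp (u s i))) = -(fun s => Real.exp (u s i))⁻¹ := by
      funext s
      simp [one_div]
    rw [hf]
    exact h
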